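/- Let P_0,P_1,…,P_T be an irreversible pebbling strategy on a finite DAG G=(V,E) with pebbling time T and pebbling cost C, and let R be the set of roots of G. Then for every subset R'⊆R there exists a spooky pebbling sub-strategy on G from (R', V∖R') to (R', ∅) with pebbling time at most (T+1)(|V|−|R'|) and pebbling cost at most C+|R'|. -/

import Mathlib

variable {V : Type*}

/-- The set of roots (vertices with out-degree 0) of the graph with edge relation `E`. -/
noncomputable def rootFinset [Finite V] (E : V → V → Prop) : Finset V :=
  (Set.toFinite {v | ∀ w, ¬ E v w}).toFinset

/-- One move of the irreversible pebble game: pebble a vertex whose direct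
predecessors are all pebbled, or unpebble any vertex. -/
def IrrevStep [DecidableEq V] (E : V → V → Prop) (A B : Finset V) : Prop :=
  ∃ v : V, (B = insert v A ∧ ∀ w, E w v → w ∈ A) ∨ B = A.erase v

/-- An irreversible pebbling strategy with pebbling time `T`. -/
def IsIrrevStrategy [Finite V] [DecidableEq V] (E : V → V → Prop)
    (P : ℕ → Finset V) (T : ℕ) : Prop :=
  P 0 = ∅ ∧ P T = rootFinset E ∧
    ∀ t, 1 ≤ t → t ≤ T → IrrevStep E (P (t - 1)) (P t)

/-- One move of the spooky pebble game: pebble, unpebble, ghost or unghost. -/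
def SpookyStep [DecidableEq V] (E : V → V → Prop) (A B SA SB : Finset V) : Prop :=
  ∃ v : V,
    (B = insert v A ∧ SB = SA ∧ ∀ w, E w v → w ∈ A) ∨
    (B = A.erase v ∧ SB = SA ∧ ∀ w, E w v → w ∈ A) ∨
    (B = A.erase v ∧ SB = insert v SA) ∨
    (B = insert v A ∧ SB = SA.erase v ∧ ∀ w, E w v → w ∈ A)

/-- A spooky pebbling sub-strategy: the move rules hold, with no boundary conditions. -/
def IsSpookySubStrategy [DecidableEq V] (E : V → V → Prop)
    (P S : ℕ → Finset V) (T : ℕ) : Prop :=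
  ∀ t, 1 ≤ t → t ≤ T → SpookyStep E (P (t - 1)) (P t) (S (t - 1)) (S t)

/-- A spooky pebbling strategy with pebbling time `T`. -/
def IsSpookyStrategy [Finite V] [DecidableEq V] (E : V → V → Prop)
    (P S : ℕ → Finset V) (T : ℕ) : Prop :=
  P 0 = ∅ ∧ S 0 = ∅ ∧ P T = rootFinset E ∧ S T = ∅ ∧
    IsSpookySubStrategy E P S T

/-- The pebbling cost of a strategy of time `T`: the maximal number of pebbles used. -/
def pebCost (P : ℕ → Finset V) (T : ℕ) : ℕ :=
  (Finset.range (T + 1)).sup fun t => (P t).card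

/-- The ghosting cost of a spooky strategy of time `T`: the maximal number of ghosts used. -/
def ghostCost (S : ℕ → Finset V) (T : ℕ) : ℕ :=
  (Finset.range (T + 1)).sup fun t => (S t).card

/-- Acyclicity of the edge relation: no directed cycles. -/
def Acyclic (E : V → V → Prop) : Prop := ∀ v, ¬ Relation.TransGen E v v

/-- The grid DAG `G◇_P` on vertex set `Fin P × Fin P` (0-indexed, so the leaf “(1,1)”
is `(0,0)` and the root “(P,P)” is `(P-1,P-1)`), with edges `(i,j)→(i+1,j)` and
`(i,j)→(i,j+1)`. -/
def gridE (P : ℕ) (a b : Fin P × Fin P) : Prop :=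
  ((b.1 : ℕ) = (a.1 : ℕ) + 1 ∧ b.2 = a.2) ∨
  (b.1 = a.1 ∧ (b.2 : ℕ) = (a.2 : ℕ) + 1)

set_option linter.unusedSectionVars false

section SpookyAux
variable {V : Type*} [DecidableEq V] {E : V → V → Prop}

inductive SReach (E : V → V → Prop) (M : ℕ) :
    Finset V × Finset V → Finset V × Finset V → ℕ → Prop
  | refl (a : Finset V × Finset V) (h : a.1.card ≤ M) : SReach E M a a 0
  | tail {a b c : Finset V × Finset V} {n : ℕ} : SReach E M a b n →
      SpookyStep E b.1 c.1 b.2 c.2 → c.1.card ≤ M → SReach E M a c (n + 1)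

theorem SReach.trans {M : ℕ} {a b c : Finset V × Finset V} {m n : ℕ}
    (h1 : SReach E M a b m) (h2 : SReach E M b c n) : SReach E M a c (m + n) := by
  induction h2 with
  | refl => exact h1
  | tail h s hc ih => exact SReach.tail ih s hc

theorem SReach.toFun {M : ℕ} {a z : Finset V × Finset V} {k : ℕ}
    (h : SReach E M a z k) :
    ∃ P S : ℕ → Finset V, P 0 = a.1 ∧ S 0 = a.2 ∧ P k = z.1 ∧ S k = z.2 ∧
      IsSpookySubStrategy E P S k ∧ pebCost P k ≤ M := by
  induction h with
  | refl ha =>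
    refine ⟨fun _ => a.1, fun _ => a.2, rfl, rfl, rfl, rfl, ?_, ?_⟩
    · intro t ht1 ht0; omega
    · simpa [pebCost] using ha
  | @tail b c n hr s hc ih =>
    obtain ⟨P, S, hP0, hS0, hPn, hSn, hsub, hcost⟩ := ih
    refine ⟨fun i => if i ≤ n then P i else c.1, fun i => if i ≤ n then S i else c.2,
      ?_, ?_, ?_, ?_, ?_, ?_⟩
    · simp [hP0]
    · simp [hS0]
    · simp
    · simp
    · intro t ht1 htn
      rcases eq_or_lt_of_le htn with h | h
      · subst h
        have h1 : n + 1 - 1 = n := by omega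
        simpa [h1, hPn, hSn] using s
      · have h2 : t ≤ n := by omega
        have h3 : t - 1 ≤ n := by omega
        simpa [h2, h3] using hsub t ht1 h2
    · apply Finset.sup_le
      intro i hi
      rcases le_or_gt i n with h | h
      · simp only [h, if_pos]
        have : (P i).card ≤ pebCost P n :=
          Finset.le_sup (f := fun t => (P t).card) (Finset.mem_range.mpr (by omega))
        exact le_trans this hcost
      · simp only [not_le.mpr h, if_neg, if_false]
        simpa using hc

/-- Tear down: ghost every element of `D`. -/
theorem sreach_sdiff (M : ℕ) (A S D : Finset V) (hA : A.card ≤ M) (hD : D ⊆ S) :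
    SReach E M (A, S) (A \ D, S) D.card := by
  classical
  induction D using Finset.induction_on with
  | empty => simpa using SReach.refl (A, S) hA
  | @insert v D hv ih =>
    have hD' : D ⊆ S := fun x hx => hD (Finset.mem_insert_of_mem hx)
    have h1 := ih hD'
    rw [Finset.card_insert_of_notMem hv]
    refine SReach.tail h1 ?_ ?_
    · refine ⟨v, Or.inr (Or.inr (Or.inl ⟨?_, ?_⟩))⟩
      · simp [Finset.sdiff_insert]
      · exact (Finset.insert_eq_self.mpr (hD (Finset.mem_insert_self v D))).symm ▸ rfl
    · exact le_trans (Finset.card_le_card (Finset.sdiff_subset)) hA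

end SpookyAux

section Forward
variable {V : Type*} [DecidableEq V] {E : V → V → Prop}

theorem sreach_forward (R' S0 : Finset V) (M : ℕ) (Pf : ℕ → Finset V) (T : ℕ)
    (hP0 : Pf 0 = ∅) (hstep : ∀ t, 1 ≤ t → t ≤ T → IrrevStep E (Pf (t - 1)) (Pf t))
    (hM : ∀ t, t ≤ T → (Pf t ∪ R').card ≤ M) :
    ∀ t, t ≤ T → (∀ v s, s < t → v ∈ Pf s → v ∉ R' → v ∈ S0) →
    ∃ n, n ≤ t ∧ SReach E M (R', S0) (Pf t ∪ R', S0) n := by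
  intro t
  induction t with
  | zero =>
    intro _ _
    refine ⟨0, le_refl 0, ?_⟩
    have : Pf 0 ∪ R' = R' := by simp [hP0]
    rw [this]
    exact SReach.refl _ (by simpa [hP0] using hM 0 (Nat.zero_le T))
  | succ t ih =>
    intro hT hdirty
    obtain ⟨n, hn, hr⟩ := ih (by omega) (fun v s hs => hdirty v s (by omega))
    obtain ⟨v, hv⟩ := hstep (t + 1) (by omega) hT
    simp only [Nat.add_sub_cancel] at hv
    rcases hv with ⟨hins, hpred⟩ | hers
    · refine ⟨n + 1, by omega, SReach.tail hr ?_ (hM (t+1) hT)⟩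
      exact ⟨v, Or.inl ⟨by simp [hins, Finset.insert_union], rfl,
        fun w hw => Finset.mem_union_left _ (hpred w hw)⟩⟩
    · by_cases hvP : v ∈ Pf t ∧ v ∉ R'
      · refine ⟨n + 1, by omega, SReach.tail hr ?_ (hM (t+1) hT)⟩
        refine ⟨v, Or.inr (Or.inr (Or.inl ⟨?_, ?_⟩))⟩
        · rw [hers, Finset.erase_union_distrib,
            Finset.erase_eq_self.mpr hvP.2]
        · exact (Finset.insert_eq_self.mpr (hdirty v t (by omega) hvP.1 hvP.2)).symm
      · have heq : Pf (t + 1) ∪ R' = Pf t ∪ R' := by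
          rw [hers]
          ext x
          simp only [Finset.mem_union, Finset.mem_erase]
          constructor
          · rintro (⟨_, hx⟩ | hx) <;> tauto
          · rintro (hx | hx)
            · by_cases hxv : x = v
              · subst hxv
                rcases not_and_or.mp hvP with h | h
                · exact absurd hx h
                · exact Or.inr (not_not.mp h)
              · exact Or.inl ⟨hxv, hx⟩
            · exact Or.inr hx
        exact ⟨n, by omega, heq ▸ hr⟩

end Forward

section Run
variable {V : Type*} [DecidableEq V] {E : V → V → Prop}

theorem sreach_run (R' : Finset V) (M : ℕ) (Pf : ℕ → Finset V) (T : ℕ)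
    (hP0 : Pf 0 = ∅) (hstep : ∀ t, 1 ≤ t → t ≤ T → IrrevStep E (Pf (t - 1)) (Pf t))
    (hM : ∀ t, t ≤ T → (Pf t ∪ R').card ≤ M)
    (u : V) (hu : u ∉ R') (τu : ℕ) (hτ1 : 1 ≤ τu) (hτT : τu ≤ T)
    (hins : Pf τu = insert u (Pf (τu - 1))) (hunotin : u ∉ Pf (τu - 1))
    (hpred : ∀ w, E w u → w ∈ Pf (τu - 1))
    (D : Finset V)
    (hdirty : ∀ v s, s < τu → v ∈ Pf s → v ∉ R' → v ∈ D) :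
    ∃ n, n ≤ τu + 1 + (Pf (τu - 1) \ R').card ∧
      SReach E M (R', D) (R', D.erase u) n := by
  obtain ⟨nf, hnf, hrf⟩ := sreach_forward R' D M Pf T hP0 hstep hM (τu - 1) (by omega)
    (fun v s hs hvs hvR => hdirty v s (by omega) hvs hvR)
  -- unghost u
  have h1 : SReach E M (R', D) (Pf τu ∪ R', D.erase u) (nf + 1) := by
    refine SReach.tail hrf ?_ (hM τu hτT)
    refine ⟨u, Or.inr (Or.inr (Or.inr ⟨?_, rfl, ?_⟩))⟩
    · rw [hins, Finset.insert_union]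
    · exact fun w hw => Finset.mem_union_left _ (hpred w hw)
  -- unpebble u
  have huPR : u ∉ Pf (τu - 1) ∪ R' := by
    simp only [Finset.mem_union, not_or]; exact ⟨hunotin, hu⟩
  have h2 : SReach E M (R', D) (Pf (τu - 1) ∪ R', D.erase u) (nf + 2) := by
    refine SReach.tail h1 ?_ (hM (τu - 1) (by omega))
    refine ⟨u, Or.inr (Or.inl ⟨?_, rfl, ?_⟩)⟩
    · rw [hins, Finset.insert_union, Finset.erase_insert huPR]
    · intro w hw
      refine Finset.mem_union_left _ ?_
      rw [hins]
      exact Finset.mem_insert_of_mem (hpred w hw)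
  -- teardown
  have hsub : Pf (τu - 1) \ R' ⊆ D.erase u := by
    intro x hx
    rw [Finset.mem_sdiff] at hx
    refine Finset.mem_erase.mpr ⟨?_, hdirty x (τu - 1) (by omega) hx.1 hx.2⟩
    rintro rfl; exact hunotin hx.1
  have h3 := sreach_sdiff (E := E) M (Pf (τu - 1) ∪ R') (D.erase u) (Pf (τu - 1) \ R')
    (hM (τu - 1) (by omega)) hsub
  have heq : (Pf (τu - 1) ∪ R') \ (Pf (τu - 1) \ R') = R' := by
    ext x
    simp only [Finset.mem_sdiff, Finset.mem_union, not_and, not_not]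
    constructor
    · rintro ⟨hx | hx, h⟩
      · exact h hx
      · exact hx
    · intro hx; exact ⟨Or.inr hx, fun _ => hx⟩
  rw [heq] at h3
  exact ⟨nf + 2 + (Pf (τu - 1) \ R').card, by omega, h2.trans h3⟩

end Run

section Outer
variable {V : Type*} [Fintype V] [DecidableEq V] {E : V → V → Prop}

theorem sreach_outer (R' : Finset V) (M : ℕ) (Pf : ℕ → Finset V) (T : ℕ)
    (hP0 : Pf 0 = ∅) (hstep : ∀ t, 1 ≤ t → t ≤ T → IrrevStep E (Pf (t - 1)) (Pf t))
    (hM : ∀ t, t ≤ T → (Pf t ∪ R').card ≤ M) (τ : V → ℕ)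
    (hτ : ∀ u, u ∉ R' → 1 ≤ τ u ∧ τ u ≤ T ∧ Pf (τ u) = insert u (Pf (τ u - 1)) ∧
      u ∉ Pf (τ u - 1) ∧ (∀ w, E w u → w ∈ Pf (τ u - 1)) ∧ ∀ s, s < τ u → u ∉ Pf s)
    (hinj : ∀ u, u ∉ R' → ∀ v, v ∉ R' → τ u = τ v → u = v) :
    ∀ D : Finset V, (∀ v ∈ D, v ∉ R') →
      (∀ v ∈ D, ∀ w, w ∉ R' → τ w ≤ τ v → w ∈ D) →
      ∃ n, n ≤ ∑ u ∈ D,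
          (τ u + 1 + ((Finset.univ \ R').filter (fun w => τ w < τ u)).card) ∧
        SReach E M (R', D) (R', ∅) n := by
  intro D
  induction D using Finset.strongInduction with
  | _ D ih =>
  intro hD hclos
  rcases D.eq_empty_or_nonempty with rfl | hne
  · refine ⟨0, by simp, ?_⟩
    exact SReach.refl _ (by simpa [hP0] using hM 0 (Nat.zero_le T))
  · obtain ⟨u, huD, humax⟩ := Finset.exists_max_image D τ hne
    have hu : u ∉ R' := hD u huD
    obtain ⟨hτ1, hτT, hins, hnotin, hpred, hmin⟩ := hτ u hu
    have hdirty : ∀ v s, s < τ u → v ∈ Pf s → v ∉ R' → v ∈ D := by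
      intro v s hs hvs hvR
      have hτv : τ v ≤ s := by
        by_contra h
        exact (hτ v hvR).2.2.2.2.2 s (by omega) hvs
      exact hclos u huD v hvR (by omega)
    obtain ⟨n1, hn1, hr1⟩ := sreach_run R' M Pf T hP0 hstep hM u hu (τ u)
      hτ1 hτT hins hnotin hpred D hdirty
    have hclos' : ∀ v ∈ D.erase u, ∀ w, w ∉ R' → τ w ≤ τ v → w ∈ D.erase u := by
      intro v hv w hwR hτw
      have hvD := Finset.mem_of_mem_erase hv
      have hvu := Finset.ne_of_mem_erase hv
      refine Finset.mem_erase.mpr ⟨?_, hclos v hvD w hwR hτw⟩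
      intro hwu
      rw [hwu] at hτw
      exact hvu (hinj v (hD v hvD) u hu (le_antisymm (humax v hvD) hτw))
    obtain ⟨n2, hn2, hr2⟩ := ih (D.erase u) (Finset.erase_ssubset huD)
      (fun v hv => hD v (Finset.mem_of_mem_erase hv)) hclos'
    refine ⟨n1 + n2, ?_, hr1.trans hr2⟩
    have hcard : (Pf (τ u - 1) \ R').card ≤
        ((Finset.univ \ R').filter (fun w => τ w < τ u)).card := by
      apply Finset.card_le_card
      intro x hx
      rw [Finset.mem_sdiff] at hx
      have hτx : τ x ≤ τ u - 1 := by
        by_contra h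
        exact (hτ x hx.2).2.2.2.2.2 (τ u - 1) (by omega) hx.1
      refine Finset.mem_filter.mpr ⟨Finset.mem_sdiff.mpr ⟨Finset.mem_univ x, hx.2⟩, by omega⟩
    calc n1 + n2 ≤ (τ u + 1 + ((Finset.univ \ R').filter (fun w => τ w < τ u)).card) +
        ∑ x ∈ D.erase u,
          (τ x + 1 + ((Finset.univ \ R').filter (fun w => τ w < τ x)).card) := by omega
      _ = _ := Finset.add_sum_erase D
        (fun x => τ x + 1 + ((Finset.univ \ R').filter (fun w => τ w < τ x)).card) huD

end Outer

section Arith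
variable {V : Type*} [DecidableEq V]

theorem sum_rank_bound (U : Finset V) (T : ℕ) (τ : V → ℕ)
    (hle : ∀ u ∈ U, τ u ≤ T)
    (hinj : ∀ u ∈ U, ∀ v ∈ U, τ u = τ v → u = v) :
    ∑ u ∈ U, (τ u + 1 + (U.filter (fun w => τ w < τ u)).card) ≤ (T + 1) * U.card := by
  classical
  have step1 : ∀ u ∈ U, τ u + (U.filter (fun w => τ u < τ w)).card ≤ T := by
    intro u hu
    have h2 : (U.filter (fun w => τ u < τ w)).card ≤ (Finset.Ioc (τ u) T).card := by
      apply Finset.card_le_card_of_injOn τ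
      · intro a ha
        rw [Finset.mem_coe, Finset.mem_filter] at ha
        exact Finset.mem_Ioc.mpr ⟨ha.2, hle a ha.1⟩
      · intro a ha b hb hab
        simp only [Finset.coe_filter, Set.mem_setOf_eq] at ha hb
        exact hinj a ha.1 b hb.1 hab
    rw [Nat.card_Ioc] at h2
    have := hle u hu
    omega
  have step2 : ∑ u ∈ U, (U.filter (fun w => τ w < τ u)).card
      = ∑ u ∈ U, (U.filter (fun w => τ u < τ w)).card := by
    simp only [Finset.card_filter]
    exact Finset.sum_comm
  have h3 : ∑ u ∈ U, (τ u + 1 + (U.filter (fun w => τ w < τ u)).card)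
      = (∑ u ∈ U, (τ u + (U.filter (fun w => τ u < τ w)).card)) + U.card := by
    rw [Finset.sum_add_distrib, Finset.sum_add_distrib, Finset.sum_add_distrib, step2,
      Finset.sum_const, smul_eq_mul, mul_one]
    ring
  rw [h3]
  have h4 : ∑ u ∈ U, (τ u + (U.filter (fun w => τ u < τ w)).card) ≤ U.card * T := by
    calc ∑ u ∈ U, (τ u + (U.filter (fun w => τ u < τ w)).card) ≤ ∑ _u ∈ U, T :=
          Finset.sum_le_sum step1
      _ = U.card * T := by rw [Finset.sum_const, smul_eq_mul]
  calc (∑ u ∈ U, (τ u + (U.filter (fun w => τ u < τ w)).card)) + U.card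
      ≤ U.card * T + U.card := add_le_add_left h4 _
    _ = (T + 1) * U.card := by ring

end Arith

section CleanAux
variable {V : Type*} [Fintype V] [DecidableEq V] {E : V → V → Prop}

theorem first_entry {Pf : ℕ → Finset V} {T : ℕ} (hP0 : Pf 0 = ∅)
    (hstep : ∀ t, 1 ≤ t → t ≤ T → IrrevStep E (Pf (t - 1)) (Pf t))
    (v : V) (h : ∃ t, t ≤ T ∧ v ∈ Pf t) :
    ∃ τv, 1 ≤ τv ∧ τv ≤ T ∧ Pf τv = insert v (Pf (τv - 1)) ∧ v ∉ Pf (τv - 1) ∧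
      (∀ w, E w v → w ∈ Pf (τv - 1)) ∧ ∀ s, s < τv → v ∉ Pf s := by
  classical
  obtain ⟨t, htT, hvt⟩ := h
  have hEx : ∃ s, v ∈ Pf s := ⟨t, hvt⟩
  set τv := Nat.find hEx with hτdef
  have hspec : v ∈ Pf τv := Nat.find_spec hEx
  have hmin : ∀ s, s < τv → v ∉ Pf s := fun s hs => Nat.find_min hEx hs
  have hτt : τv ≤ t := Nat.find_min' hEx hvt
  have hτ1 : 1 ≤ τv := by
    rcases Nat.eq_zero_or_pos τv with h0 | h1
    · exact absurd (h0 ▸ hspec) (by simp [hP0])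
    · exact h1
  have hτT : τv ≤ T := le_trans hτt htT
  have hnot : v ∉ Pf (τv - 1) := hmin _ (by omega)
  obtain ⟨u, hu⟩ := hstep τv hτ1 hτT
  rcases hu with ⟨hins, hpred⟩ | hers
  · have hvu : v = u := by
      rcases Finset.mem_insert.mp (hins ▸ hspec) with h | h
      · exact h
      · exact absurd h hnot
    subst hvu
    exact ⟨τv, hτ1, hτT, hins, hnot, hpred, hmin⟩
  · exact absurd (Finset.mem_of_mem_erase (hers ▸ hspec)) hnot

theorem all_pebbled (hacyc : Acyclic E) {Pf : ℕ → Finset V} {T : ℕ}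
    (hPT : Pf T = rootFinset E) (hP0 : Pf 0 = ∅)
    (hstep : ∀ t, 1 ≤ t → t ≤ T → IrrevStep E (Pf (t - 1)) (Pf t)) :
    ∀ v : V, ∃ t, t ≤ T ∧ v ∈ Pf t := by
  have hwf : WellFounded (Function.swap E) := by
    letI : IsIrrefl V (Relation.TransGen (Function.swap E)) :=
      ⟨fun v h => hacyc v (Relation.transGen_swap.mp h)⟩
    exact Subrelation.wf (fun h => Relation.TransGen.single h)
      (Finite.wellFounded_of_trans_of_irrefl (Relation.TransGen (Function.swap E)))
  intro v
  refine hwf.induction (C := fun v => ∃ t, t ≤ T ∧ v ∈ Pf t) v ?_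
  intro v IH
  by_cases hv : ∀ w, ¬ E v w
  · refine ⟨T, le_refl T, ?_⟩
    rw [hPT, rootFinset, Set.Finite.mem_toFinset]
    exact hv
  · push_neg at hv
    obtain ⟨w, hw⟩ := hv
    obtain ⟨τw, _, hτT, _, _, hpred, _⟩ := first_entry hP0 hstep w (IH w hw)
    exact ⟨τw - 1, by omega, hpred v hw⟩



end CleanAux

/-- From an irreversible pebbling strategy with time `T` and cost `C`,
for every subset `R'` of the roots there is a spooky pebbling sub-strategy from
`(R', V∖R')` to `(R', ∅)` with pebbling time at most `(T+1)(|V|-|R'|)` and pebbling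
cost at most `C + |R'|`. -/
theorem spooky_sub_cleaning {V : Type*} [Fintype V] [DecidableEq V] (E : V → V → Prop)
    (hacyc : Acyclic E) (Pf : ℕ → Finset V) (T C : ℕ)
    (hstrat : IsIrrevStrategy E Pf T) (hcost : pebCost Pf T = C)
    (R' : Finset V) (hR' : R' ⊆ rootFinset E) :
    ∃ (P' S' : ℕ → Finset V) (K : ℕ),
      IsSpookySubStrategy E P' S' K ∧
      P' 0 = R' ∧ S' 0 = Finset.univ \ R' ∧
      P' K = R' ∧ S' K = ∅ ∧
      K ≤ (T + 1) * (Fintype.card V - R'.card) ∧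
      pebCost P' K ≤ C + R'.card := by
  classical
  obtain ⟨hP0, hPT, hstep⟩ := hstrat
  set M := C + R'.card with hMdef
  have hM : ∀ t, t ≤ T → (Pf t ∪ R').card ≤ M := by
    intro t ht
    have h1 : (Pf t ∪ R').card ≤ (Pf t).card + R'.card := Finset.card_union_le _ _
    have h2 : (Pf t).card ≤ C := by
      rw [← hcost]
      exact Finset.le_sup (f := fun t => (Pf t).card) (Finset.mem_range.mpr (by omega))
    omega
  have hall := all_pebbled hacyc hPT hP0 hstep
  choose τ hτ1 hτT hins hnot hpred hmin using fun v => first_entry hP0 hstep v (hall v)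
  have hinj : ∀ u v : V, τ u = τ v → u = v := by
    intro u v huv
    have h1 : v ∈ Pf (τ v) := by rw [hins v]; exact Finset.mem_insert_self v _
    rw [← huv, hins u] at h1
    rcases Finset.mem_insert.mp h1 with h | h
    · exact h.symm
    · exact absurd h (huv ▸ hnot v)
  set U : Finset V := Finset.univ \ R' with hUdef
  obtain ⟨n, hn, hr⟩ := sreach_outer R' M Pf T hP0 hstep hM τ
    (fun u _ => ⟨hτ1 u, hτT u, hins u, hnot u, hpred u, hmin u⟩)
    (fun u _ v _ h => hinj u v h) U
    (fun v hv => (Finset.mem_sdiff.mp hv).2)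
    (fun v _ w hw _ => Finset.mem_sdiff.mpr ⟨Finset.mem_univ w, hw⟩)
  have hsum : ∑ u ∈ U, (τ u + 1 + (U.filter (fun w => τ w < τ u)).card)
      ≤ (T + 1) * U.card :=
    sum_rank_bound U T τ (fun u _ => hτT u) (fun u _ v _ h => hinj u v h)
  have hUcard : U.card = Fintype.card V - R'.card := by
    rw [hUdef, Finset.card_sdiff_of_subset (Finset.subset_univ R'), Finset.card_univ]
  obtain ⟨P', S', hP'0, hS'0, hP'n, hS'n, hsub, hcost'⟩ := hr.toFun
  exact ⟨P', S', n, hsub, hP'0, hS'0, hP'n, hS'n,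
    by rw [← hUcard]; exact le_trans hn hsum, hcost'⟩
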